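/- If there exists a multiset {q_1,…,q_r} of positive elements of W_r(α) with Σ_{i=1}^r q_i^{-1} = α, then there exists a tree T with Δ(T) = r and ρ(T) = α. -/

import Mathlib

open scoped BigOperators

/-- `W r α` : the smallest set of nonneg reals containing `α` and closed under the
multiset rule from the paper. -/
inductive W (r : ℕ) (α : ℝ) : ℝ → Prop
  | base : W r α α
  | step (s : ℕ) (q : Fin s → ℝ) (β : ℝ)
      (hq : ∀ i, W r α (q i)) (hqpos : ∀ i, 0 < q i)
      (hβeq : β = α - ∑ i, (q i)⁻¹) (hβ0 : 0 ≤ β)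
      (hs1 : 1 ≤ s) (hs : (s : ℤ) ≤ (r : ℤ) - ⌈β / (β + 1)⌉) : W r α β

/-- Spectral radius of a finite graph: supremum of real eigenvalues of its adjacency matrix. -/
noncomputable def specRad {V : Type} [Fintype V] [DecidableEq V]
    (G : SimpleGraph V) [DecidableRel G.Adj] : ℝ :=
  sSup {μ : ℝ | Module.End.HasEigenvalue (Matrix.toLin' (G.adjMatrix ℝ)) μ}


open Finset
open scoped Matrix

/-- parent-map adjacency on ℕ -/
def padj (f : ℕ → ℕ) (i j : ℕ) : Prop := i ≠ j ∧ (f i = j ∨ f j = i)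

instance padj.dec (f : ℕ → ℕ) (i j : ℕ) : Decidable (padj f i j) :=
  inferInstanceAs (Decidable (_ ∧ _))

lemma padj_comm {f : ℕ → ℕ} {i j : ℕ} : padj f i j ↔ padj f j i := by
  unfold padj; constructor <;> rintro ⟨h1, h2⟩ <;> exact ⟨h1.symm, h2.symm⟩

def pdeg (f : ℕ → ℕ) (n i : ℕ) : ℕ := ((Finset.range n).filter (padj f i)).card

def glue (n : ℕ) (f g : ℕ → ℕ) : ℕ → ℕ :=
  fun j => if j < n then f j else if j = n then 0 else n + g (j - n)

lemma glue_low {n : ℕ} (f g : ℕ → ℕ) {j : ℕ} (h : j < n) : glue n f g j = f j := by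
  simp [glue, h]

lemma glue_root {n : ℕ} (f g : ℕ → ℕ) : glue n f g n = 0 := by
  simp [glue]

lemma glue_high {n : ℕ} (f g : ℕ → ℕ) {b : ℕ} (hb : 0 < b) :
    glue n f g (n + b) = n + g b := by
  have h1 : ¬ (n + b < n) := by omega
  have h2 : n + b ≠ n := by omega
  simp only [glue, if_neg h1, if_neg h2, Nat.add_sub_cancel_left]

lemma padj_glue_low {n : ℕ} {f g : ℕ → ℕ} {i j : ℕ} (hi : i < n) (hj : j < n) :
    padj (glue n f g) i j ↔ padj f i j := by
  unfold padj; rw [glue_low f g hi, glue_low f g hj]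

lemma padj_glue_high {n : ℕ} {f g : ℕ → ℕ} (hn : 1 ≤ n) (hg0 : g 0 = 0) (a b : ℕ) :
    padj (glue n f g) (n + a) (n + b) ↔ padj g a b := by
  unfold padj
  rcases Nat.eq_zero_or_pos a with rfl | ha <;> rcases Nat.eq_zero_or_pos b with rfl | hb
  · simp
  · rw [Nat.add_zero, glue_root f g, glue_high f g hb]
    constructor
    · rintro ⟨h1, h2 | h2⟩
      · omega
      · exact ⟨by omega, Or.inr (by omega)⟩
    · rintro ⟨h1, h2 | h2⟩
      · omega
      · exact ⟨by omega, Or.inr (by omega)⟩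
  · rw [Nat.add_zero, glue_root f g, glue_high f g ha]
    constructor
    · rintro ⟨h1, h2 | h2⟩
      · exact ⟨by omega, Or.inl (by omega)⟩
      · omega
    · rintro ⟨h1, h2 | h2⟩
      · exact ⟨by omega, Or.inl (by omega)⟩
      · omega
  · rw [glue_high f g ha, glue_high f g hb]
    constructor
    · rintro ⟨h1, h2 | h2⟩
      · exact ⟨by omega, Or.inl (by omega)⟩
      · exact ⟨by omega, Or.inr (by omega)⟩
    · rintro ⟨h1, h2 | h2⟩
      · exact ⟨by omega, Or.inl (by omega)⟩
      · exact ⟨by omega, Or.inr (by omega)⟩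

lemma padj_glue_cross {n : ℕ} {f g : ℕ → ℕ} {i : ℕ} (hi : i < n)
    (hfn : ∀ k, k < n → f k < n) (b : ℕ) :
    padj (glue n f g) i (n + b) ↔ (i = 0 ∧ b = 0) := by
  unfold padj
  have hf := hfn i hi
  rcases Nat.eq_zero_or_pos b with rfl | hb
  · rw [Nat.add_zero, glue_root f g, glue_low f g hi]
    constructor
    · rintro ⟨h1, h2 | h2⟩ <;> omega
    · rintro ⟨rfl, -⟩; exact ⟨by omega, Or.inr rfl⟩
  · rw [glue_high f g hb, glue_low f g hi]
    constructor
    · rintro ⟨h1, h2 | h2⟩ <;> omega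
    · rintro ⟨-, h⟩; omega

section SumLemmas

variable {M : Type*} [AddCommMonoid M] {n m : ℕ} {f g : ℕ → ℕ}

lemma glue_sum_mid (hn : 1 ≤ n) (hfn : ∀ k, k < n → f k < n)
    {i : ℕ} (hi0 : 0 < i) (hin : i < n) (w : ℕ → M) :
    ∑ j ∈ Finset.range (n + m), (if padj (glue n f g) i j then w j else 0)
      = ∑ j ∈ Finset.range n, (if padj f i j then w j else 0) := by
  rw [Finset.sum_range_add]
  have h1 : ∑ j ∈ Finset.range n, (if padj (glue n f g) i j then w j else 0)
      = ∑ j ∈ Finset.range n, (if padj f i j then w j else 0) := by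
    refine Finset.sum_congr rfl fun j hj => ?_
    rw [Finset.mem_range] at hj
    simp only [padj_glue_low hin hj]
  have h2 : ∑ b ∈ Finset.range m, (if padj (glue n f g) i (n + b) then w (n + b) else 0)
      = 0 := by
    refine Finset.sum_eq_zero fun b _ => ?_
    rw [if_neg]
    rw [padj_glue_cross hin hfn b]
    rintro ⟨rfl, -⟩; omega
  rw [h1, h2, add_zero]

lemma glue_sum_root (hn : 1 ≤ n) (hm : 1 ≤ m) (hfn : ∀ k, k < n → f k < n) (w : ℕ → M) :
    ∑ j ∈ Finset.range (n + m), (if padj (glue n f g) 0 j then w j else 0)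
      = (∑ j ∈ Finset.range n, (if padj f 0 j then w j else 0)) + w n := by
  rw [Finset.sum_range_add]
  have h1 : ∑ j ∈ Finset.range n, (if padj (glue n f g) 0 j then w j else 0)
      = ∑ j ∈ Finset.range n, (if padj f 0 j then w j else 0) := by
    refine Finset.sum_congr rfl fun j hj => ?_
    rw [Finset.mem_range] at hj
    simp only [padj_glue_low hn hj]
  have h2 : ∑ b ∈ Finset.range m, (if padj (glue n f g) 0 (n + b) then w (n + b) else 0)
      = w n := by
    rw [Finset.sum_eq_single_of_mem 0 (Finset.mem_range.mpr hm)]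
    · rw [if_pos, Nat.add_zero]
      rw [padj_glue_cross hn hfn 0]; exact ⟨rfl, rfl⟩
    · intro b _ hb
      rw [if_neg]
      rw [padj_glue_cross hn hfn b]
      rintro ⟨-, rfl⟩; exact hb rfl
  rw [h1, h2]

lemma glue_sum_sub0 (hn : 1 ≤ n) (hg0 : g 0 = 0) (hfn : ∀ k, k < n → f k < n) (w : ℕ → M) :
    ∑ j ∈ Finset.range (n + m), (if padj (glue n f g) n j then w j else 0)
      = w 0 + ∑ b ∈ Finset.range m, (if padj g 0 b then w (n + b) else 0) := by
  rw [Finset.sum_range_add]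
  have h1 : ∑ j ∈ Finset.range n, (if padj (glue n f g) n j then w j else 0) = w 0 := by
    rw [Finset.sum_eq_single_of_mem 0 (Finset.mem_range.mpr hn)]
    · rw [if_pos]
      rw [padj_comm]
      have := padj_glue_cross (f := f) (g := g) hn hfn 0
      rw [Nat.add_zero] at this
      rw [this]; exact ⟨rfl, rfl⟩
    · intro j hj hjne
      rw [Finset.mem_range] at hj
      rw [if_neg]
      rw [padj_comm]
      have := padj_glue_cross (f := f) (g := g) hj hfn 0
      rw [Nat.add_zero] at this
      rw [this]
      rintro ⟨rfl, -⟩; exact hjne rfl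
  have h2 : ∑ b ∈ Finset.range m, (if padj (glue n f g) n (n + b) then w (n + b) else 0)
      = ∑ b ∈ Finset.range m, (if padj g 0 b then w (n + b) else 0) := by
    refine Finset.sum_congr rfl fun b _ => ?_
    have h := padj_glue_high (f := f) (g := g) hn hg0 0 b
    rw [Nat.add_zero] at h
    exact if_congr h rfl rfl
  rw [h1, h2]

lemma glue_sum_sub (hn : 1 ≤ n) (hg0 : g 0 = 0) (hfn : ∀ k, k < n → f k < n)
    {a : ℕ} (ha : 0 < a) (w : ℕ → M) :
    ∑ j ∈ Finset.range (n + m), (if padj (glue n f g) (n + a) j then w j else 0)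
      = ∑ b ∈ Finset.range m, (if padj g a b then w (n + b) else 0) := by
  rw [Finset.sum_range_add]
  have h1 : ∑ j ∈ Finset.range n, (if padj (glue n f g) (n + a) j then w j else 0) = 0 := by
    refine Finset.sum_eq_zero fun j hj => ?_
    rw [Finset.mem_range] at hj
    rw [if_neg]
    rw [padj_comm, padj_glue_cross hj hfn a]
    rintro ⟨-, rfl⟩; omega
  have h2 : ∑ b ∈ Finset.range m, (if padj (glue n f g) (n + a) (n + b) then w (n + b) else 0)
      = ∑ b ∈ Finset.range m, (if padj g a b then w (n + b) else 0) := by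
    refine Finset.sum_congr rfl fun b _ => ?_
    exact if_congr (padj_glue_high hn hg0 a b) rfl rfl
  rw [h1, h2, zero_add]

end SumLemmas

/-- Invariant: a rooted tree on `{0,...,n-1}` (root `0`, parent map `f`) with positive
vertex-weights `x`, satisfying the eigen-equation `(Ax)_i = α x_i` at every non-root vertex,
root-defect `β` (i.e. `(Ax)_0 = (α - β) x_0`), all non-root degrees `≤ r`,
and root degree exactly `d`. -/
structure TInv (r : ℕ) (α β : ℝ) (d n : ℕ) (f : ℕ → ℕ) (x : ℕ → ℝ) : Prop where
  hn : 1 ≤ n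
  hf0 : f 0 = 0
  hflt : ∀ j, 0 < j → j < n → f j < j
  hxpos : ∀ j, j < n → 0 < x j
  hx0 : x 0 = 1
  heig : ∀ i, 0 < i → i < n →
    (∑ j ∈ Finset.range n, if padj f i j then x j else 0) = α * x i
  hroot : (∑ j ∈ Finset.range n, if padj f 0 j then x j else 0) = α - β
  hdeg : ∀ i, 0 < i → i < n → pdeg f n i ≤ r
  hd : pdeg f n 0 = d

lemma TInv.hfn {r : ℕ} {α β : ℝ} {d n : ℕ} {f : ℕ → ℕ} {x : ℕ → ℝ}
    (I : TInv r α β d n f x) : ∀ k, k < n → f k < n := by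
  intro k hk
  rcases Nat.eq_zero_or_pos k with rfl | h
  · rw [I.hf0]; omega
  · have := I.hflt k h hk; omega

lemma tinv_base (r : ℕ) (α : ℝ) : TInv r α α 0 1 (fun _ => 0) (fun _ => 1) := by
  refine ⟨le_refl 1, rfl, by omega, fun _ _ => one_pos, rfl, by omega, ?_, by omega, ?_⟩
  · rw [Finset.sum_range_one, if_neg, sub_self]
    rintro ⟨h, -⟩; exact h rfl
  · unfold pdeg
    rw [Finset.card_eq_zero, Finset.filter_eq_empty_iff]
    intro j hj
    rw [Finset.mem_range] at hj
    rintro ⟨h, -⟩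
    omega

noncomputable def gluex (n : ℕ) (qq : ℝ) (x y : ℕ → ℝ) : ℕ → ℝ :=
  fun j => if j < n then x j else qq⁻¹ * y (j - n)

lemma gluex_low {n : ℕ} (qq : ℝ) (x y : ℕ → ℝ) {j : ℕ} (h : j < n) :
    gluex n qq x y j = x j := if_pos h

lemma gluex_high {n : ℕ} (qq : ℝ) (x y : ℕ → ℝ) (b : ℕ) :
    gluex n qq x y (n + b) = qq⁻¹ * y b := by
  rw [gluex, if_neg (by omega), Nat.add_sub_cancel_left]

lemma tinv_attach {r n m d e : ℕ} {α γ qq : ℝ} {f g : ℕ → ℕ} {x y : ℕ → ℝ}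
    (I : TInv r α γ d n f x) (J : TInv r α qq e m g y) (hq : 0 < qq) (he : e + 1 ≤ r) :
    TInv r α (γ - qq⁻¹) (d + 1) (n + m) (glue n f g) (gluex n qq x y) := by
  have hn := I.hn
  have hm := J.hn
  have hfn := I.hfn
  have hg0 := J.hf0
  constructor
  · omega
  · rw [glue_low f g hn]; exact I.hf0
  · -- parent decreases
    intro j hj0 hjn
    rcases Nat.lt_or_ge j n with h | h
    · rw [glue_low f g h]; exact I.hflt j hj0 h
    · rcases Nat.eq_or_lt_of_le h with rfl | h'
      · rw [glue_root f g]; omega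
      · obtain ⟨a, rfl⟩ : ∃ a, j = n + a := ⟨j - n, by omega⟩
        have ha : 0 < a := by omega
        rw [glue_high f g ha]
        have := J.hflt a ha (by omega)
        omega
  · -- positivity
    intro j hjn
    rcases Nat.lt_or_ge j n with h | h
    · rw [gluex_low qq x y h]; exact I.hxpos j h
    · obtain ⟨a, rfl⟩ : ∃ a, j = n + a := ⟨j - n, by omega⟩
      rw [gluex_high qq x y a]
      exact mul_pos (inv_pos.mpr hq) (J.hxpos a (by omega))
  · rw [gluex_low qq x y hn]; exact I.hx0
  · -- eigen-equation at non-root vertices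
    intro i hi0 hin
    rcases Nat.lt_or_ge i n with h | h
    · rw [glue_sum_mid hn hfn hi0 h, gluex_low qq x y h]
      have : ∑ j ∈ Finset.range n, (if padj f i j then gluex n qq x y j else 0)
          = ∑ j ∈ Finset.range n, (if padj f i j then x j else 0) := by
        refine Finset.sum_congr rfl fun j hj => ?_
        rw [Finset.mem_range] at hj
        rw [gluex_low qq x y hj]
      rw [this, I.heig i hi0 h]
    · rcases Nat.eq_or_lt_of_le h with rfl | h'
      · -- the root of the attached subtree
        rw [glue_sum_sub0 hn hg0 hfn, gluex_low qq x y hn, I.hx0]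
        have : ∑ b ∈ Finset.range m, (if padj g 0 b then gluex n qq x y (n + b) else 0)
            = qq⁻¹ * ∑ b ∈ Finset.range m, (if padj g 0 b then y b else 0) := by
          rw [Finset.mul_sum]
          refine Finset.sum_congr rfl fun b _ => ?_
          rw [gluex_high qq x y b]
          split <;> simp
        rw [this, J.hroot]
        rw [show (n : ℕ) = n + 0 from rfl, gluex_high qq x y 0, J.hx0]
        field_simp
        ring
      · obtain ⟨a, rfl⟩ : ∃ a, i = n + a := ⟨i - n, by omega⟩
        have ha : 0 < a := by omega
        rw [glue_sum_sub hn hg0 hfn ha, gluex_high qq x y a]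
        have : ∑ b ∈ Finset.range m, (if padj g a b then gluex n qq x y (n + b) else 0)
            = qq⁻¹ * ∑ b ∈ Finset.range m, (if padj g a b then y b else 0) := by
          rw [Finset.mul_sum]
          refine Finset.sum_congr rfl fun b _ => ?_
          rw [gluex_high qq x y b]
          split <;> simp
        rw [this, J.heig a ha (by omega)]
        ring
  · -- root defect
    rw [glue_sum_root hn hm hfn]
    have : ∑ j ∈ Finset.range n, (if padj f 0 j then gluex n qq x y j else 0)
        = ∑ j ∈ Finset.range n, (if padj f 0 j then x j else 0) := by
      refine Finset.sum_congr rfl fun j hj => ?_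
      rw [Finset.mem_range] at hj
      rw [gluex_low qq x y hj]
    rw [this, I.hroot, show (n : ℕ) = n + 0 from rfl, gluex_high qq x y 0, J.hx0]
    ring
  · -- degrees of non-root vertices
    intro i hi0 hin
    rcases Nat.lt_or_ge i n with h | h
    · have : pdeg (glue n f g) (n + m) i = pdeg f n i := by
        unfold pdeg
        rw [Finset.card_filter, Finset.card_filter]
        exact glue_sum_mid hn hfn hi0 h _
      rw [this]; exact I.hdeg i hi0 h
    · rcases Nat.eq_or_lt_of_le h with rfl | h'
      · have : pdeg (glue n f g) (n + m) n = 1 + pdeg g m 0 := by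
          unfold pdeg
          rw [Finset.card_filter, Finset.card_filter]
          rw [glue_sum_sub0 hn hg0 hfn (fun _ => (1 : ℕ))]
        rw [this]
        have := J.hd
        omega
      · obtain ⟨a, rfl⟩ : ∃ a, i = n + a := ⟨i - n, by omega⟩
        have ha : 0 < a := by omega
        have : pdeg (glue n f g) (n + m) (n + a) = pdeg g m a := by
          unfold pdeg
          rw [Finset.card_filter, Finset.card_filter]
          exact glue_sum_sub hn hg0 hfn ha _
        rw [this]; exact J.hdeg a ha (by omega)
  · -- root degree
    have : pdeg (glue n f g) (n + m) 0 = pdeg f n 0 + 1 := by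
      unfold pdeg
      rw [Finset.card_filter, Finset.card_filter]
      rw [glue_sum_root hn hm hfn (fun _ => (1 : ℕ))]
    rw [this, I.hd]

lemma ceil_ratio {z : ℝ} (hz : 0 < z) : ⌈z / (z + 1)⌉ = 1 := by
  have h1 : (0:ℝ) < z + 1 := by linarith
  refine le_antisymm ?_ ?_
  · rw [Int.ceil_le]
    push_cast
    rw [div_le_one h1]
    linarith
  · have : (0:ℤ) < ⌈z / (z + 1)⌉ := by
      rw [Int.lt_ceil]
      push_cast
      exact div_pos hz h1
    omega

lemma tinv_fold {r s : ℕ} {α : ℝ} (Q : ℕ → ℝ)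
    (hsub : ∀ i, i < s → ∃ n f x e, TInv r α (Q i) e n f x ∧ e + 1 ≤ r ∧ 0 < Q i) :
    ∀ k, k ≤ s → ∃ n f x, TInv r α (α - ∑ i ∈ Finset.range k, (Q i)⁻¹) k n f x := by
  intro k
  induction k with
  | zero =>
      intro _
      exact ⟨1, _, _, by simpa using tinv_base r α⟩
  | succ k ih =>
      intro hk
      obtain ⟨n, f, x, I⟩ := ih (by omega)
      obtain ⟨m, g, y, e, J, he, hQ⟩ := hsub k (by omega)
      refine ⟨n + m, glue n f g, gluex n (Q k) x y, ?_⟩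
      have h2 := tinv_attach I J hQ he
      rw [Finset.sum_range_succ, ← sub_sub]
      exact h2

lemma W_tinv {r : ℕ} (hr : 0 < r) {α : ℝ} (hα : 0 < α) :
    ∀ {β}, W r α β → ∃ n f x d, TInv r α β d n f x ∧ (d : ℤ) ≤ (r : ℤ) - ⌈β / (β + 1)⌉ := by
  intro β hβ
  induction hβ with
  | base =>
      refine ⟨1, _, _, 0, tinv_base r α, ?_⟩
      rw [ceil_ratio hα]
      omega
  | step s q β hq hqpos hβeq hβ0 hs1 hs ih =>
      classical
      set Q : ℕ → ℝ := fun i => if h : i < s then q ⟨i, h⟩ else 1 with hQdef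
      have hsub : ∀ i, i < s → ∃ n f x e, TInv r α (Q i) e n f x ∧ e + 1 ≤ r ∧ 0 < Q i := by
        intro i hi
        obtain ⟨n, f, x, d, I, hd⟩ := ih ⟨i, hi⟩
        rw [ceil_ratio (hqpos ⟨i, hi⟩)] at hd
        have hQi : Q i = q ⟨i, hi⟩ := dif_pos hi
        exact ⟨n, f, x, d, by rw [hQi]; exact I, by omega, by rw [hQi]; exact hqpos _⟩
      obtain ⟨n, f, x, I⟩ := tinv_fold Q hsub s (le_refl s)
      have hsum : ∑ i ∈ Finset.range s, (Q i)⁻¹ = ∑ i, (q i)⁻¹ := by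
        rw [← Fin.sum_univ_eq_sum_range (fun i => (Q i)⁻¹) s]
        refine Finset.sum_congr rfl fun i _ => ?_
        simp only [hQdef, dif_pos i.isLt, Fin.eta]
      refine ⟨n, f, x, s, ?_, hs⟩
      rw [hβeq]
      rw [hsum] at I
      exact I

lemma main_aux (r n : ℕ) (α : ℝ) (f : ℕ → ℕ) (x : ℕ → ℝ)
    (hn : 2 ≤ n) (hf0 : f 0 = 0) (hflt : ∀ j, 0 < j → j < n → f j < j)
    (hxpos : ∀ j, j < n → 0 < x j)
    (heig : ∀ i, i < n → (∑ j ∈ Finset.range n, if padj f i j then x j else 0) = α * x i)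
    (hdeg : ∀ i, i < n → pdeg f n i ≤ r) (hd0 : pdeg f n 0 = r) :
    ∃ (G : SimpleGraph (Fin n)) (_ : DecidableRel G.Adj),
      G.IsTree ∧ G.maxDegree = r ∧ specRad G = α := by
  have hfn : ∀ k, k < n → f k < n := by
    intro k hk
    rcases Nat.eq_zero_or_pos k with rfl | h
    · rw [hf0]; omega
    · have := hflt k h hk; omega
  set G : SimpleGraph (Fin n) :=
    { Adj := fun a b => padj f a.val b.val
      symm := by
        constructor
        rintro a b ⟨h1, h2⟩
        exact ⟨fun h => h1 (by rw [h]), h2.symm⟩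
      loopless := by constructor; rintro a ⟨h1, -⟩; exact h1 rfl } with hG
  have hAdj : ∀ a b : Fin n, G.Adj a b ↔ padj f a.val b.val := fun a b => Iff.rfl
  letI hDec : DecidableRel G.Adj := fun a b => padj.dec f a.val b.val
  have hzlt : (0 : ℕ) < n := by omega
  set z0 : Fin n := ⟨0, hzlt⟩ with hz0
  -- unique smaller neighbor
  have huniq : ∀ a b : Fin n, G.Adj a b → b.val < a.val → b.val = f a.val := by
    rintro a b ⟨h1, h2 | h2⟩ hlt
    · exact h2.symm
    · exfalso
      rcases Nat.eq_zero_or_pos b.val with hb | hb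
      · rw [hb, hf0] at h2; omega
      · have := hflt b.val hb b.isLt; omega
  -- adjacency to parent
  have hpar : ∀ a : Fin n, 0 < a.val → G.Adj a ⟨f a.val, hfn a.val a.isLt⟩ := by
    intro a ha
    refine ⟨?_, Or.inl rfl⟩
    have := hflt a.val ha a.isLt
    intro hcon
    have h2 : a.val = f a.val := hcon
    omega
  -- connectivity
  have hreach : ∀ a : Fin n, G.Reachable a z0 := by
    intro a
    obtain ⟨k, hk⟩ : ∃ k, a.val = k := ⟨a.val, rfl⟩
    induction k using Nat.strong_induction_on generalizing a with
    | _ k ih =>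
      rcases Nat.eq_zero_or_pos a.val with h0 | h0
      · have : a = z0 := Fin.ext h0
        rw [this]
      · have hadj := hpar a h0
        have hlt : f a.val < k := by
          have := hflt a.val h0 a.isLt; omega
        exact (hadj.reachable).trans (ih (f a.val) hlt _ rfl)
  have hconn : G.Connected := by
    rw [SimpleGraph.connected_iff]
    exact ⟨fun a b => (hreach a).trans (hreach b).symm, ⟨z0⟩⟩
  -- acyclicity
  have hacyc : G.IsAcyclic := by
    intro v c hc
    -- take the maximal vertex of the cycle
    have hvmem : v ∈ c.support.toFinset := List.mem_toFinset.mpr c.start_mem_support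
    set S := c.support.toFinset with hS
    have hSne : S.Nonempty := ⟨v, hvmem⟩
    set mx : Fin n := S.max' hSne with hmx
    have hmmem : mx ∈ c.support := List.mem_toFinset.mp (S.max'_mem hSne)
    have hmax : ∀ a ∈ c.support, a ≤ mx := fun a ha =>
      S.le_max' a (List.mem_toFinset.mpr ha)
    have hmaxrot : ∀ a ∈ (c.rotate mx hmmem).support, a ≤ mx := by
      intro a ha
      rcases eq_or_ne a mx with rfl | hne
      · exact le_refl _
      · apply hmax
        have h1 : a ∈ (c.rotate mx hmmem).support.tail := by
          have := SimpleGraph.Walk.support_eq_cons (c.rotate mx hmmem)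
          rw [this] at ha
          rcases List.mem_cons.mp ha with rfl | h
          · exact absurd rfl hne
          · exact h
        have h2 := SimpleGraph.Walk.support_rotate c mx hmmem
        have h3 : a ∈ c.support.tail := (h2.mem_iff).mp h1
        rw [SimpleGraph.Walk.support_eq_cons c]
        exact List.mem_cons_of_mem _ h3
    have hcyc' := hc.rotate hmmem
    revert hcyc' hmaxrot
    generalize c.rotate mx hmmem = w
    intro hmaxrot hw
    cases w with
    | nil => exact hw.ne_nil rfl
    | cons h p =>
      rename_i b
      -- the second vertex b
      have hbmem : b ∈ (SimpleGraph.Walk.cons h p).support := by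
        rw [SimpleGraph.Walk.support_cons]
        exact List.mem_cons_of_mem _ p.start_mem_support
      have hble : b < mx := lt_of_le_of_ne (hmaxrot b hbmem) (h.ne'.symm ∘ Eq.symm) 
      -- the last vertex b'
      rcases hrev : p.reverse with _ | ⟨h2, p2⟩
      · exact G.loopless.irrefl _ h
      · rename_i b'
        have hb'mem : b' ∈ (SimpleGraph.Walk.cons h p).support := by
          rw [SimpleGraph.Walk.support_cons]
          refine List.mem_cons_of_mem _ ?_
          have : b' ∈ p.reverse.support := by
            rw [hrev, SimpleGraph.Walk.support_cons]
            exact List.mem_cons_of_mem _ p2.start_mem_support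
          rw [SimpleGraph.Walk.support_reverse, List.mem_reverse] at this
          exact this
        have hb'le : b' < mx := lt_of_le_of_ne (hmaxrot b' hb'mem) (h2.ne'.symm ∘ Eq.symm)
        -- both equal f mx
        have he1 : b.val = f mx.val := huniq mx b h hble
        have he2 : b'.val = f mx.val := huniq mx b' h2 hb'le
        have hbb' : b = b' := Fin.ext (he1.trans he2.symm)
        -- edge multiplicity contradiction
        have ht := hw.isCircuit.isTrail
        rw [SimpleGraph.Walk.isTrail_cons] at ht
        have hmem : s(mx, b') ∈ p.edges := by
          have h5 : s(mx, b') ∈ p.reverse.edges := by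
            rw [hrev, SimpleGraph.Walk.edges_cons]
            exact List.mem_cons_self
          rw [SimpleGraph.Walk.edges_reverse, List.mem_reverse] at h5
          exact h5
        rw [← hbb'] at hmem
        exact ht.2 hmem
  -- degrees
  have hdegree : ∀ a : Fin n, G.degree a = pdeg f n a.val := by
    intro a
    have h1 : G.degree a = (Finset.univ.filter (fun b => G.Adj a b)).card := by
      rw [← SimpleGraph.neighborFinset_eq_filter]
      rfl
    rw [h1]
    unfold pdeg
    refine Finset.card_bij' (fun (b : Fin n) _ => b.val)
      (fun j hj => ⟨j, Finset.mem_range.mp (Finset.mem_filter.mp hj).1⟩) ?_ ?_ ?_ ?_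
    · intro b hb
      rw [Finset.mem_filter] at hb ⊢
      exact ⟨Finset.mem_range.mpr b.isLt, hb.2⟩
    · intro j hj
      rw [Finset.mem_filter] at hj ⊢
      exact ⟨Finset.mem_univ _, hj.2⟩
    · intro b hb; rfl
    · intro j hj; rfl
  have hmax : G.maxDegree = r := by
    refine le_antisymm ?_ ?_
    · refine SimpleGraph.maxDegree_le_of_forall_degree_le (G := G) r ?_
      intro v
      rw [hdegree v]
      exact hdeg v.val v.isLt
    · have := SimpleGraph.degree_le_maxDegree G z0
      rw [hdegree z0] at this
      have hz : (z0 : Fin n).val = 0 := rfl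
      rw [hz, hd0] at this
      exact this
  -- spectral radius
  have hspec : specRad G = α := by
    set A := G.adjMatrix ℝ with hA
    set X : Fin n → ℝ := fun a => x a.val with hX
    have hAnn : ∀ i j : Fin n, 0 ≤ A i j := by
      intro i j
      rw [hA, SimpleGraph.adjMatrix_apply]
      split <;> norm_num
    have hAsymm : ∀ i j : Fin n, A i j = A j i := by
      intro i j
      rw [hA, SimpleGraph.adjMatrix_apply, SimpleGraph.adjMatrix_apply]
      exact if_congr ⟨fun h => h.symm, fun h => h.symm⟩ rfl rfl
    have hXpos : ∀ i, 0 < X i := fun i => hxpos i.val i.isLt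
    have hmulX : A *ᵥ X = α • X := by
      funext i
      rw [hA, SimpleGraph.adjMatrix_mulVec_apply, SimpleGraph.neighborFinset_eq_filter,
        Finset.sum_filter]
      have h2 : ∑ u : Fin n, (if G.Adj i u then X u else 0)
          = ∑ j ∈ Finset.range n, (if padj f i.val j then x j else 0) := by
        rw [← Fin.sum_univ_eq_sum_range (fun j => if padj f i.val j then x j else 0) n]
      rw [h2, heig i.val i.isLt]
      simp
      exact Or.inl rfl
    have hXne : X ≠ 0 := by
      intro hcon
      have := congrFun hcon z0
      have h2 := hXpos z0
      rw [this] at h2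
      exact lt_irrefl _ h2
    have heval : Module.End.HasEigenvalue (Matrix.toLin' A) α := by
      refine Module.End.hasEigenvalue_of_hasEigenvector ⟨?_, hXne⟩
      rw [Module.End.mem_eigenspace_iff, Matrix.toLin'_apply, hmulX]
    have hub : ∀ μ : ℝ, Module.End.HasEigenvalue (Matrix.toLin' A) μ → μ ≤ α := by
      intro μ hμ
      obtain ⟨y, hy⟩ := hμ.exists_hasEigenvector
      have hy1 : A *ᵥ y = μ • y := by
        rw [← Matrix.toLin'_apply A y]
        exact Module.End.mem_eigenspace_iff.mp hy.1
      set z : Fin n → ℝ := fun i => |y i| with hz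
      have hptw : ∀ i, |μ| * z i ≤ (A *ᵥ z) i := by
        intro i
        have h1 : (A *ᵥ y) i = μ * y i := by rw [hy1]; simp
        have h2 : |μ| * z i = |(A *ᵥ y) i| := by
          rw [h1, abs_mul]
        rw [h2]
        have h3 : (A *ᵥ y) i = ∑ j, A i j * y j := by
          simp [Matrix.mulVec, dotProduct]
        have h4 : (A *ᵥ z) i = ∑ j, A i j * |y j| := by
          simp [Matrix.mulVec, dotProduct, hz]
        rw [h3, h4]
        refine le_trans (Finset.abs_sum_le_sum_abs _ _) ?_
        refine Finset.sum_le_sum fun j _ => ?_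
        rw [abs_mul, abs_of_nonneg (hAnn i j)]
      have hswap : X ⬝ᵥ (A *ᵥ z) = (A *ᵥ X) ⬝ᵥ z := by
        rw [Matrix.dotProduct_mulVec, ← Matrix.mulVec_transpose, hA,
          SimpleGraph.transpose_adjMatrix]
      have hS : 0 < X ⬝ᵥ z := by
        have hyne : ∃ i, y i ≠ 0 := by
          by_contra hcon
          push_neg at hcon
          exact hy.2 (funext hcon)
        obtain ⟨i0, hi0⟩ := hyne
        refine Finset.sum_pos' (fun i _ => ?_) ⟨i0, Finset.mem_univ _, ?_⟩
        · exact mul_nonneg (le_of_lt (hXpos i)) (abs_nonneg _)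
        · exact mul_pos (hXpos i0) (abs_pos.mpr hi0)
      have hkey : |μ| * (X ⬝ᵥ z) ≤ α * (X ⬝ᵥ z) := by
        have hL : |μ| * (X ⬝ᵥ z) = ∑ i, X i * (|μ| * z i) := by
          rw [dotProduct, Finset.mul_sum]
          refine Finset.sum_congr rfl fun i _ => ?_
          ring
        have hR : X ⬝ᵥ (A *ᵥ z) = ∑ i, X i * (A *ᵥ z) i := rfl
        have hmid : ∑ i, X i * (|μ| * z i) ≤ ∑ i, X i * (A *ᵥ z) i := by
          refine Finset.sum_le_sum fun i _ => ?_
          exact mul_le_mul_of_nonneg_left (hptw i) (le_of_lt (hXpos i))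
        have hR2 : (A *ᵥ X) ⬝ᵥ z = α * (X ⬝ᵥ z) := by
          rw [hmulX, smul_dotProduct]
          rfl
        calc |μ| * (X ⬝ᵥ z) = ∑ i, X i * (|μ| * z i) := hL
          _ ≤ ∑ i, X i * (A *ᵥ z) i := hmid
          _ = X ⬝ᵥ (A *ᵥ z) := hR.symm
          _ = (A *ᵥ X) ⬝ᵥ z := hswap
          _ = α * (X ⬝ᵥ z) := hR2
      have habs : |μ| ≤ α := by
        have := (mul_le_mul_iff_of_pos_right hS).mp hkey
        exact this
      exact le_trans (le_abs_self μ) habs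
    unfold specRad
    refine le_antisymm ?_ ?_
    · exact csSup_le ⟨α, heval⟩ (fun μ hμ => hub μ hμ)
    · exact le_csSup ⟨α, fun μ hμ => hub μ hμ⟩ heval
  exact ⟨G, hDec, ⟨hconn, hacyc⟩, hmax, hspec⟩


theorem stmt_16 (r : ℕ) (hr : 0 < r) (α : ℝ) (hα : 0 < α)
    (q : Fin r → ℝ) (hq : ∀ i, W r α (q i)) (hqpos : ∀ i, 0 < q i)
    (hsum : ∑ i, (q i)⁻¹ = α) :
    ∃ (n : ℕ) (G : SimpleGraph (Fin n)) (_ : DecidableRel G.Adj),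
      G.IsTree ∧ 2 ≤ n ∧ G.maxDegree = r ∧ specRad G = α := by
  classical
  set Q : ℕ → ℝ := fun i => if h : i < r then q ⟨i, h⟩ else 1 with hQdef
  have hsub : ∀ i, i < r → ∃ n f x e, TInv r α (Q i) e n f x ∧ e + 1 ≤ r ∧ 0 < Q i := by
    intro i hi
    obtain ⟨n, f, x, d, I, hd⟩ := W_tinv hr hα (hq ⟨i, hi⟩)
    rw [ceil_ratio (hqpos ⟨i, hi⟩)] at hd
    have hQi : Q i = q ⟨i, hi⟩ := dif_pos hi
    exact ⟨n, f, x, d, by rw [hQi]; exact I, by omega, by rw [hQi]; exact hqpos _⟩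
  obtain ⟨n, f, x, I⟩ := tinv_fold Q hsub r (le_refl r)
  have hsumQ : ∑ i ∈ Finset.range r, (Q i)⁻¹ = α := by
    rw [← Fin.sum_univ_eq_sum_range (fun i => (Q i)⁻¹) r] at *
    rw [← hsum]
    refine Finset.sum_congr rfl fun i _ => ?_
    simp only [hQdef, dif_pos i.isLt, Fin.eta]
  rw [hsumQ, sub_self] at I
  -- extract data
  have heig : ∀ i, i < n →
      (∑ j ∈ Finset.range n, if padj f i j then x j else 0) = α * x i := by
    intro i hi
    rcases Nat.eq_zero_or_pos i with rfl | h0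
    · rw [I.hroot, I.hx0, sub_zero, mul_one]
    · exact I.heig i h0 hi
  have hdeg : ∀ i, i < n → pdeg f n i ≤ r := by
    intro i hi
    rcases Nat.eq_zero_or_pos i with rfl | h0
    · rw [I.hd]
    · exact I.hdeg i h0 hi
  have hn2 : 2 ≤ n := by
    have hpos : 0 < pdeg f n 0 := by rw [I.hd]; exact hr
    rw [pdeg, Finset.card_pos] at hpos
    obtain ⟨j, hj⟩ := hpos
    rw [Finset.mem_filter, Finset.mem_range] at hj
    have : j ≠ 0 := by
      intro h
      rw [h] at hj
      exact hj.2.1 rfl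
    omega
  obtain ⟨G, hDec, h1, h2, h3⟩ :=
    main_aux r n α f x hn2 I.hf0 I.hflt I.hxpos heig hdeg I.hd
  exact ⟨n, G, hDec, h1, hn2, h2, h3⟩
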